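/- arXiv:1404.6574 — 8 statements merged into one kernel-verified Lean document; each statement's English description precedes it below -/
import Mathlib

section
/- Suppose p, r, q are pairwise distinct integers with 1 ≤ p, r, q ≤ K and the word a satisfies a_p = a_r = a_q = ↑. Then (p,q)^a_λ ∘ (r,q)^a_λ = (r,q)^a_λ ∘ (p,r)^a_λ + (r,p)^a_λ ∘ (p,q)^a_λ in End_k(V(a)). -/
open Finset

/-- The set of boxes of the pyramid associated to `lam` (`Box.1` is the column, 0-based). -/
abbrev Box {ℓ : ℕ} (lam : Fin ℓ → ℕ) : Type := (j : Fin ℓ) × Fin (lam j)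

/-- A sequence is unimodular: it weakly increases up to some index `κ` and weakly
decreases afterwards. -/
def Unimodular {ℓ : ℕ} (lam : Fin ℓ → ℕ) : Prop :=
  ∃ κ : Fin ℓ, (∀ i j : Fin ℓ, i ≤ j → j ≤ κ → lam i ≤ lam j) ∧
    (∀ i j : Fin ℓ, κ ≤ i → i ≤ j → lam j ≤ lam i)

/-- The free `k`-module `V(a)` with basis indexed by `K`-tuples of boxes. -/
abbrev V (k : Type*) [CommRing k] {ℓ : ℕ} (lam : Fin ℓ → ℕ) (K : ℕ) : Type _ :=
  (Fin K → Box lam) →₀ k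

/-- The modified transposition `(p,q)^a_λ` (positions are 0-based elements of `Fin K`;
the letter `↑` is `true` and `↓` is `false`). -/
noncomputable def modT (k : Type*) [CommRing k] {ℓ K : ℕ} (lam : Fin ℓ → ℕ)
    (a : Fin K → Bool) (p q : Fin K) : Module.End k (V k lam K) :=
  Finsupp.lift (V k lam K) k (Fin K → Box lam) (fun j =>
    if a q then
      if q < p then
        (if (j p).1 ≤ (j q).1 then Finsupp.single (j ∘ Equiv.swap p q) (1 : k) else 0)
      else
        (if (j q).1 < (j p).1 then -Finsupp.single (j ∘ Equiv.swap p q) (1 : k) else 0)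
    else
      if q < p then
        (if j p = j q then
          -∑ c ∈ univ.filter (fun c : Box lam => (j p).1 ≤ c.1),
            Finsupp.single (Function.update (Function.update j p c) q c) (1 : k)
        else 0)
      else
        (if j p = j q then
          ∑ c ∈ univ.filter (fun c : Box lam => c.1 < (j p).1),
            Finsupp.single (Function.update (Function.update j p c) q c) (1 : k)
        else 0))

section Aux
variable {k : Type*} [CommRing k] {ℓ K : ℕ} {lam : Fin ℓ → ℕ}

lemma modT_single (a : Fin K → Bool) (p q : Fin K) (hq : a q = true) (j : Fin K → Box lam) :
    modT k lam a p q (Finsupp.single j (1 : k)) =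
      if q < p then (if (j p).1 ≤ (j q).1 then Finsupp.single (j ∘ Equiv.swap p q) (1:k) else 0)
      else (if (j q).1 < (j p).1 then -Finsupp.single (j ∘ Equiv.swap p q) (1:k) else 0) := by
  simp [modT, hq]

lemma swap_comp1 {B : Type*} (p r q : Fin K) (hpr : p≠r) (hpq : p≠q) (hrq : r≠q) (j : Fin K → B) :
    (j ∘ Equiv.swap r q) ∘ Equiv.swap p q = (j ∘ Equiv.swap p r) ∘ Equiv.swap r q := by
  funext x
  simp only [Function.comp_apply, Equiv.swap_apply_def]
  split_ifs <;> simp_all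

lemma swap_comp2 {B : Type*} (p r q : Fin K) (hpr : p≠r) (hpq : p≠q) (hrq : r≠q) (j : Fin K → B) :
    (j ∘ Equiv.swap r q) ∘ Equiv.swap p q = (j ∘ Equiv.swap p q) ∘ Equiv.swap r p := by
  funext x
  simp only [Function.comp_apply, Equiv.swap_apply_def]
  split_ifs <;> simp_all

end Aux


set_option maxHeartbeats 4000000 in
/-- Lemma 4.2(ii): `(p,q)∘(r,q) = (r,q)∘(p,r) + (r,p)∘(p,q)` when `a_p = a_r = a_q = ↑`. -/
theorem modT_comm_relation_upup
    (k : Type*) [CommRing k] {ℓ K : ℕ} (hℓ : 1 ≤ ℓ)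
    (lam : Fin ℓ → ℕ) (hpos : ∀ j, 0 < lam j) (huni : Unimodular lam)
    (m : Fin ℓ → k)
    (a : Fin K → Bool) (p r q : Fin K)
    (hpr : p ≠ r) (hpq : p ≠ q) (hrq : r ≠ q)
    (hp : a p = true) (hr : a r = true) (hq : a q = true) :
    (modT k lam a p q) ∘ₗ (modT k lam a r q) =
      (modT k lam a r q) ∘ₗ (modT k lam a p r) +
        (modT k lam a r p) ∘ₗ (modT k lam a p q) := by
  have hqp := hpq.symm; have hrp := hpr.symm; have hqr := hrq.symm
  apply Finsupp.lhom_ext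
  intro j b
  have hb : (Finsupp.single j b : V k lam K) = b • Finsupp.single j 1 := by
    simp [Finsupp.smul_single]
  rw [hb]
  simp only [map_smul, LinearMap.comp_apply, LinearMap.add_apply]
  congr 1
  rw [modT_single a r q hq j, modT_single a p r hr j, modT_single a p q hq j]
  have e1 := swap_comp1 p r q hpr hpq hrq j
  have e2 := swap_comp2 p r q hpr hpq hrq j
  have hA : (j ∘ Equiv.swap r q) p = j p := by
    simp [Equiv.swap_apply_of_ne_of_ne hpr hpq]
  have hB : (j ∘ Equiv.swap r q) q = j r := by simp
  have hC : (j ∘ Equiv.swap p r) r = j p := by simp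
  have hD : (j ∘ Equiv.swap p r) q = j q := by
    simp [Equiv.swap_apply_of_ne_of_ne hqp hqr]
  have hE : (j ∘ Equiv.swap p q) r = j r := by
    simp [Equiv.swap_apply_of_ne_of_ne hrp hrq]
  have hF : (j ∘ Equiv.swap p q) p = j q := by simp
  rcases hpq.lt_or_gt with h1 | h1 <;> rcases hrq.lt_or_gt with h2 | h2 <;>
    rcases hpr.lt_or_gt with h3 | h3 <;>
  · simp only [h1, h2, h3, lt_asymm h1, lt_asymm h2, lt_asymm h3, if_true, if_false,
      iff_true, iff_false]
    split_ifs <;>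
      simp only [map_zero, map_neg, zero_add, add_zero, neg_zero,
        modT_single a p q hq, modT_single a r q hq, modT_single a r p hp,
        hA, hB, hC, hD, hE, hF, h1, h2, h3, lt_asymm h1, lt_asymm h2, lt_asymm h3,
        if_true, if_false, iff_true, iff_false] <;>
    split_ifs <;>
      first
        | rfl
        | omega
        | (exfalso; omega)
        | (simp only [← e1, ← e2, map_zero, map_neg, zero_add, add_zero, neg_zero,
              neg_neg] <;>
            first | rfl | abel | omega | (exfalso; omega))
end

section
/- Suppose p, r, q are pairwise distinct integers with 1 ≤ p, r, q ≤ K and the word a satisfies a_p = a_r = ↑ and a_q = ↓. Then (p,q)^a_λ ∘ (r,q)^a_λ + (p,r)^a_λ ∘ (r,q)^a_λ + (p,q)^a_λ ∘ (r,p)^a_λ = 0 in End_k(V(a)). -/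
open Finset

section aux
variable (k : Type*) [CommRing k] {ℓ K : ℕ}

/-- coefficient for the down-type transposition -/
def dc (q p : Fin K) (t s : Fin ℓ) : k :=
  if q < p then (if t ≤ s then -1 else 0) else (if s < t then 1 else 0)

/-- coefficient for the up-type transposition -/
def uc (q p : Fin K) (t s : Fin ℓ) : k :=
  if q < p then (if t ≤ s then 1 else 0) else (if s < t then -1 else 0)

set_option maxHeartbeats 1600000 in
lemma key (p r q : Fin K) (x y d : Fin ℓ)
    (hpr : p ≠ r) (hpq : p ≠ q) (hrq : r ≠ q) :
    dc k q p x d * dc k q r y x + uc k r p x d * dc k q r y d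
      + dc k q p y d * uc k p r y x = 0 := by
  rw [← Fin.val_ne_iff] at hpr hpq hrq
  unfold dc uc
  simp only [Fin.lt_def, Fin.le_def]
  split_ifs <;> first | (exfalso; omega) | ring1

variable (lam : Fin ℓ → ℕ) (a : Fin K → Bool)

lemma modT_single_up (p q : Fin K) (hq : a q = true) (j : Fin K → Box lam) (b : k) :
    modT k lam a p q (Finsupp.single j b) =
      Finsupp.single (j ∘ Equiv.swap p q) (uc k q p ((j p).1) ((j q).1) * b) := by
  rw [modT, Finsupp.lift_apply, Finsupp.sum_single_index (by simp), hq]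
  simp only [if_true]
  unfold uc
  split_ifs <;>
    simp [Finsupp.smul_single, mul_comm]

lemma modT_single_down (p q : Fin K) (hq : a q = false) (j : Fin K → Box lam) (b : k) :
    modT k lam a p q (Finsupp.single j b) =
      (if j p = j q then
        ∑ c : Box lam,
          Finsupp.single (Function.update (Function.update j p c) q c)
            (dc k q p ((j p).1) (c.1) * b)
      else 0) := by
  rw [modT, Finsupp.lift_apply, Finsupp.sum_single_index (by simp), hq]
  simp only [Bool.false_eq_true, if_false]
  have hf : ∀ (P : Box lam → Prop) (_ : DecidablePred P)
      (u : Box lam → (Fin K → Box lam)) (b : k),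
      ∑ c : Box lam, Finsupp.single (u c) (if P c then b else 0)
        = b • ∑ c ∈ filter P univ, Finsupp.single (u c) (1:k) := by
    intro P _ u b
    rw [Finset.smul_sum, Finset.sum_filter]
    exact Finset.sum_congr rfl fun c _ => by split_ifs <;> simp
  unfold dc
  split_ifs with h1 h2 h2 <;> try simp
  · rw [hf _ inferInstance _ (-b)]
    simp [neg_smul]
  · rw [hf _ inferInstance _ b]
end aux

set_option maxHeartbeats 2000000 in
/-- Lemma 4.2(iii): `(p,q)∘(r,q) + (p,r)∘(r,q) + (p,q)∘(r,p) = 0`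
when `a_p = a_r = ↑` and `a_q = ↓`. -/
theorem modT_comm_relation_updown
    (k : Type*) [CommRing k] {ℓ K : ℕ} (hℓ : 1 ≤ ℓ)
    (lam : Fin ℓ → ℕ) (hpos : ∀ j, 0 < lam j) (huni : Unimodular lam)
    (m : Fin ℓ → k)
    (a : Fin K → Bool) (p r q : Fin K)
    (hpr : p ≠ r) (hpq : p ≠ q) (hrq : r ≠ q)
    (hp : a p = true) (hr : a r = true) (hq : a q = false) :
    (modT k lam a p q) ∘ₗ (modT k lam a r q) +
      (modT k lam a p r) ∘ₗ (modT k lam a r q) +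
        (modT k lam a p q) ∘ₗ (modT k lam a r p) = 0 := by
  apply Finsupp.lhom_ext
  intro j b
  simp only [LinearMap.add_apply, LinearMap.comp_apply, LinearMap.zero_apply]
  rw [modT_single_down k lam a r q hq j b, modT_single_up k lam a r p hp j b]
  have hswap_p : (j ∘ Equiv.swap r p) p = j r := by
    simp [Equiv.swap_apply_right]
  have hswap_q : (j ∘ Equiv.swap r p) q = j q := by
    simp [Equiv.swap_apply_of_ne_of_ne (Ne.symm hrq) (Ne.symm hpq)]
  by_cases hb : j r = j q
  · rw [if_pos hb]
    -- term 1
    have e1 : ∀ c : Box lam,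
        modT k lam a p q (Finsupp.single (Function.update (Function.update j r c) q c)
            (dc k q r ((j r).1) (c.1) * b))
          = (if j p = c then
              ∑ d : Box lam, Finsupp.single
                (Function.update (Function.update
                  (Function.update (Function.update j r c) q c) p d) q d)
                (dc k q p ((j p).1) (d.1) * (dc k q r ((j r).1) (c.1) * b))
            else 0) := by
      intro c
      rw [modT_single_down k lam a p q hq]
      simp only [Function.update_of_ne hpq, Function.update_of_ne hpr,
        Function.update_self]
    have e2 : ∀ c : Box lam,
        modT k lam a p r (Finsupp.single (Function.update (Function.update j r c) q c)
            (dc k q r ((j r).1) (c.1) * b))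
          = Finsupp.single
              ((Function.update (Function.update j r c) q c) ∘ Equiv.swap p r)
              (uc k r p ((j p).1) (c.1) * (dc k q r ((j r).1) (c.1) * b)) := by
      intro c
      rw [modT_single_up k lam a p r hr]
      simp only [Function.update_of_ne hpq, Function.update_of_ne hpr,
        Function.update_of_ne hrq, Function.update_self]
    rw [map_sum, map_sum]
    simp only [e1, e2]
    rw [Finset.sum_ite_eq univ (j p)]
    simp only [Finset.mem_univ, if_true]
    -- term 3
    rw [modT_single_down k lam a p q hq, hswap_p, hswap_q, if_pos hb]
    -- normalize indices
    set g : Box lam → (Fin K → Box lam) := fun d =>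
      Function.update (Function.update (Function.update j r (j p)) p d) q d with hgdef
    have hg1 : ∀ d : Box lam,
        Function.update (Function.update
          (Function.update (Function.update j r (j p)) q (j p)) p d) q d = g d := by
      intro d
      funext i
      simp only [hgdef, Function.update_apply]
      split_ifs <;> simp_all
    have hg2 : ∀ c : Box lam,
        (Function.update (Function.update j r c) q c) ∘ Equiv.swap p r = g c := by
      intro c
      funext i
      simp only [hgdef, Function.comp_apply, Equiv.swap_apply_def, Function.update_apply]
      split_ifs <;> simp_all
    have hg3 : ∀ d : Box lam,
        Function.update (Function.update (j ∘ Equiv.swap r p) p d) q d = g d := by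
      intro d
      funext i
      simp only [hgdef, Function.comp_apply, Equiv.swap_apply_def, Function.update_apply]
      split_ifs <;> simp_all
    simp only [hg1, hg2, hg3]
    rw [← Finset.sum_add_distrib, ← Finset.sum_add_distrib]
    apply Finset.sum_eq_zero
    intro d _
    rw [← Finsupp.single_add, ← Finsupp.single_add]
    rw [show dc k q p ((j p).1) (d.1) * (dc k q r ((j r).1) ((j p).1) * b)
        + uc k r p ((j p).1) (d.1) * (dc k q r ((j r).1) (d.1) * b)
        + dc k q p ((j r).1) (d.1) * (uc k p r ((j r).1) ((j p).1) * b) = 0 from by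
      linear_combination b * key k p r q ((j p).1) ((j r).1) (d.1) hpr hpq hrq]
    exact Finsupp.single_zero _
  · rw [if_neg hb, map_zero, map_zero,
      modT_single_down k lam a p q hq, hswap_p, hswap_q, if_neg hb]
    simp
end

section
/- Suppose p, r, q_1, q_2 are pairwise distinct integers with 1 ≤ p, r, q_1, q_2 ≤ K and the word a satisfies a_p = a_r = ↑ (the letters a_{q_1}, a_{q_2} are arbitrary). Then (p,q_1)^a_λ ∘ (r,q_2)^a_λ = (r,q_2)^a_λ ∘ (p,q_1)^a_λ in End_k(V(a)). -/
open Finset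

section Aux
variable (k : Type*) [CommRing k] {ℓ K : ℕ} (lam : Fin ℓ → ℕ)

/-- A generic operator on `V` that is "local at positions `p, q`": the coefficient
function `φ x y b c` gives the coefficient of replacing entries `(x, y)` at positions
`(p, q)` by `(b, c)`. -/
noncomputable def genT (p q : Fin K)
    (φ : Box lam → Box lam → Box lam → Box lam → k) : Module.End k (V k lam K) :=
  Finsupp.lift _ k _ (fun j => ∑ c, ∑ b,
    φ (j p) (j q) b c • Finsupp.single (Function.update (Function.update j p b) q c) (1 : k))

lemma genT_single (p q : Fin K) (φ) (j : Fin K → Box lam) :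
    genT k lam p q φ (Finsupp.single j (1 : k)) =
      ∑ c, ∑ b,
        φ (j p) (j q) b c • Finsupp.single (Function.update (Function.update j p b) q c) (1 : k) := by
  simp [genT]

lemma upd4_comm {α β : Type*} [DecidableEq α] (j : α → β) (p q r s : α)
    (hpr : p ≠ r) (hps : p ≠ s) (hqr : q ≠ r) (hqs : q ≠ s) (b c b' c' : β) :
    Function.update (Function.update (Function.update (Function.update j r b) s c) p b') q c'
      = Function.update (Function.update (Function.update (Function.update j p b') q c') r b) s c := by
  funext x
  simp only [Function.update]
  split_ifs <;> subst_vars <;> simp_all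

lemma sum4_swap {M α : Type*} [AddCommMonoid M] [Fintype α] (f : α → α → α → α → M) :
    ∑ a, ∑ b, ∑ c, ∑ d, f a b c d = ∑ c, ∑ d, ∑ a, ∑ b, f a b c d := by
  calc ∑ a, ∑ b, ∑ c, ∑ d, f a b c d
      = ∑ a, ∑ c, ∑ b, ∑ d, f a b c d := by
        exact Finset.sum_congr rfl fun a _ => Finset.sum_comm
    _ = ∑ a, ∑ c, ∑ d, ∑ b, f a b c d := by
        refine Finset.sum_congr rfl fun a _ => Finset.sum_congr rfl fun c _ => Finset.sum_comm
    _ = ∑ c, ∑ a, ∑ d, ∑ b, f a b c d := Finset.sum_comm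
    _ = ∑ c, ∑ d, ∑ a, ∑ b, f a b c d := Finset.sum_congr rfl fun c _ => Finset.sum_comm

lemma genT_comm (p q r s : Fin K)
    (hpr : p ≠ r) (hps : p ≠ s) (hqr : q ≠ r) (hqs : q ≠ s)
    (φ ψ : Box lam → Box lam → Box lam → Box lam → k) :
    genT k lam p q φ ∘ₗ genT k lam r s ψ = genT k lam r s ψ ∘ₗ genT k lam p q φ := by
  apply Finsupp.lhom_ext
  intro j m
  have hsm : (Finsupp.single j m : V k lam K) = m • Finsupp.single j (1 : k) := by simp
  rw [LinearMap.comp_apply, LinearMap.comp_apply, hsm, map_smul, map_smul, map_smul, map_smul]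
  congr 1
  rw [genT_single, genT_single, map_sum, map_sum]
  simp only [map_sum, map_smul, genT_single, Finset.smul_sum, smul_smul,
    Function.update_of_ne hpr.symm, Function.update_of_ne hps.symm,
    Function.update_of_ne hqr.symm, Function.update_of_ne hqs.symm,
    Function.update_of_ne hpr, Function.update_of_ne hps,
    Function.update_of_ne hqr, Function.update_of_ne hqs]
  rw [sum4_swap]
  refine Finset.sum_congr rfl fun c _ => Finset.sum_congr rfl fun b _ =>
    Finset.sum_congr rfl fun c' _ => Finset.sum_congr rfl fun b' _ => ?_
  rw [mul_comm, upd4_comm _ _ _ _ _ hpr hps hqr hqs]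

lemma comp_swap_eq {α β : Type*} [DecidableEq α] (j : α → β) (p q : α) (hpq : p ≠ q) :
    j ∘ Equiv.swap p q = Function.update (Function.update j p (j q)) q (j p) := by
  funext x
  by_cases hx : x = q
  · subst hx; simp
  · by_cases hx' : x = p
    · subst hx'; simp [Function.update_of_ne hpq, Equiv.swap_apply_left]
    · simp [Function.update_of_ne hx, Function.update_of_ne hx',
        Equiv.swap_apply_of_ne_of_ne hx' hx]

/-- The coefficient function realizing `modT` as a `genT`. -/
def phiOf (a : Fin K → Bool) (p q : Fin K) :
    Box lam → Box lam → Box lam → Box lam → k :=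
  fun x y b c =>
    if a q then
      if q < p then
        (if b = y then if c = x then (if x.1 ≤ y.1 then 1 else 0) else 0 else 0)
      else
        (if b = y then if c = x then (if y.1 < x.1 then -1 else 0) else 0 else 0)
    else
      if q < p then
        (if b = c then (if x = y ∧ x.1 ≤ c.1 then -1 else 0) else 0)
      else
        (if b = c then (if x = y ∧ c.1 < x.1 then 1 else 0) else 0)

lemma modT_eq_genT (a : Fin K → Bool) (p q : Fin K) (hpq : p ≠ q) :
    modT k lam a p q = genT k lam p q (phiOf k lam a p q) := by
  apply Finsupp.lhom_ext
  intro j m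
  have hsm : (Finsupp.single j m : V k lam K) = m • Finsupp.single j (1 : k) := by simp
  rw [hsm, map_smul, map_smul]
  congr 1
  rw [genT_single]
  by_cases haq : a q <;> by_cases hqp : q < p <;>
    by_cases hxy : j p = j q <;>
    simp [modT, phiOf, haq, hqp, hxy, ite_smul, zero_smul, ite_and,
      Finset.sum_ite_eq', comp_swap_eq j p q hpq, Finset.sum_filter, neg_smul,
      ← Finset.sum_neg_distrib, apply_ite Neg.neg] <;>
    exact Finset.sum_congr rfl (fun x _ => by split_ifs <;> simp)

end Aux

/-- Lemma 4.2(iv): `(p,q₁)` and `(r,q₂)` commute when `p, r, q₁, q₂` are pairwise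
distinct and `a_p = a_r = ↑`. -/
theorem modT_commute
    (k : Type*) [CommRing k] {ℓ K : ℕ} (hℓ : 1 ≤ ℓ)
    (lam : Fin ℓ → ℕ) (hpos : ∀ j, 0 < lam j) (huni : Unimodular lam)
    (m : Fin ℓ → k)
    (a : Fin K → Bool) (p r q₁ q₂ : Fin K)
    (hpr : p ≠ r) (hpq₁ : p ≠ q₁) (hpq₂ : p ≠ q₂)
    (hrq₁ : r ≠ q₁) (hrq₂ : r ≠ q₂) (hq : q₁ ≠ q₂)
    (hp : a p = true) (hr : a r = true) :
    (modT k lam a p q₁) ∘ₗ (modT k lam a r q₂) =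
      (modT k lam a r q₂) ∘ₗ (modT k lam a p q₁) := by
  rw [modT_eq_genT k lam a p q₁ hpq₁, modT_eq_genT k lam a r q₂ hrq₂]
  exact genT_comm k lam p q₁ r q₂ hpr hpq₂ hrq₁.symm hq _ _
end

section
/- Let a and b be words in {↑,↓} of lengths k and l, set K = k + l, and let S : V(a↑↑b) → V(a↑↑b) be the k-linear map given on basis vectors by S(v_i) = v_{i∘(k+1 k+2)}, where i∘(k+1 k+2) is i with the entries in positions k+1 and k+2 interchanged. Let p be a positive integer such that the p-th letter of the word a↓↓b is ↑. Then, writing (p,q)_λ for (p,q)^{a↑↑b}_λ: (i) S ∘ (p,q)_λ = (p,q)_λ ∘ S whenever q ≠ p and either q ≤ k or k+2 < q ≤ K+2; (ii) S ∘ (p,k+1)_λ = (p,k+2)_λ ∘ S; (iii) S ∘ (p,k+2)_λ = (p,k+1)_λ ∘ S; (iv) S ∘ (k+1,q)_λ = (k+2,q)_λ ∘ S whenever q ≤ k or k+2 < q ≤ K+2; (v) (k+2,k+1)_λ ∘ S = S ∘ (k+1,k+2)_λ + 1_{V(a↑↑b)}. -/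
open Finset

/-- The concatenation `ab` of two words. -/
def catW {kk ll : ℕ} (a : Fin kk → Bool) (b : Fin ll → Bool) : Fin (kk + ll) → Bool :=
  fun t => if h : t.val < kk then a ⟨t.val, h⟩ else b ⟨t.val - kk, by have := t.isLt; omega⟩

/-- The word `a x y b` obtained by inserting the two letters `x, y` between `a` and `b`. -/
def insW {kk ll : ℕ} (a : Fin kk → Bool) (x y : Bool) (b : Fin ll → Bool) :
    Fin (kk + ll + 2) → Bool :=
  fun t =>
    if h : t.val < kk then a ⟨t.val, h⟩
    else if h2 : t.val = kk then x
    else if h3 : t.val = kk + 1 then y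
    else b ⟨t.val - (kk + 2), by have := t.isLt; omega⟩

/-- `i⟨c⟩`: insert the box `c` in positions `k+1` and `k+2` of the tuple `i`. -/
def insB {ℓ : ℕ} {lam : Fin ℓ → ℕ} {kk ll : ℕ} (i : Fin (kk + ll) → Box lam) (c : Box lam) :
    Fin (kk + ll + 2) → Box lam :=
  fun t =>
    if h : t.val < kk then i ⟨t.val, by omega⟩
    else if h2 : t.val < kk + 2 then c
    else i ⟨t.val - 2, by have := t.isLt; omega⟩

/-- The map `S : V(a↑↑b) → V(a↑↑b)` interchanging the entries in positions
`k+1` and `k+2` of each basis tuple. -/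
noncomputable def Smap (k : Type*) [CommRing k] {ℓ : ℕ} (lam : Fin ℓ → ℕ) (kk ll : ℕ) :
    Module.End k (V k lam (kk + ll + 2)) :=
  Finsupp.lift (V k lam (kk + ll + 2)) k (Fin (kk + ll + 2) → Box lam)
    (fun i =>
      Finsupp.single (i ∘ Equiv.swap ⟨kk, by omega⟩ ⟨kk + 1, by omega⟩) (1 : k))

/-! ### Auxiliary lemmas -/

/-- The function underlying `modT`. -/
noncomputable def modTF (k : Type*) [CommRing k] {ℓ K : ℕ} (lam : Fin ℓ → ℕ)
    (a : Fin K → Bool) (p q : Fin K) (j : Fin K → Box lam) : V k lam K :=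
  if a q then
    if q < p then
      (if (j p).1 ≤ (j q).1 then Finsupp.single (j ∘ Equiv.swap p q) (1 : k) else 0)
    else
      (if (j q).1 < (j p).1 then -Finsupp.single (j ∘ Equiv.swap p q) (1 : k) else 0)
  else
    if q < p then
      (if j p = j q then
        -∑ c ∈ univ.filter (fun c : Box lam => (j p).1 ≤ c.1),
          Finsupp.single (Function.update (Function.update j p c) q c) (1 : k)
      else 0)
    else
      (if j p = j q then
        ∑ c ∈ univ.filter (fun c : Box lam => c.1 < (j p).1),
          Finsupp.single (Function.update (Function.update j p c) q c) (1 : k)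
      else 0)

lemma modT_single_s7 (k : Type*) [CommRing k] {ℓ K : ℕ} (lam : Fin ℓ → ℕ)
    (a : Fin K → Bool) (p q : Fin K) (j : Fin K → Box lam) (c : k) :
    modT k lam a p q (Finsupp.single j c) = c • modTF k lam a p q j := by
  have h : modT k lam a p q = Finsupp.lift (V k lam K) k (Fin K → Box lam)
      (modTF k lam a p q) := rfl
  rw [h, Finsupp.lift_apply]
  exact Finsupp.sum_single_index (zero_smul _ _)

lemma smap_single (k : Type*) [CommRing k] {ℓ : ℕ} (lam : Fin ℓ → ℕ) (kk ll : ℕ)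
    (j : Fin (kk + ll + 2) → Box lam) (c : k) :
    Smap k lam kk ll (Finsupp.single j c) =
      Finsupp.single (j ∘ Equiv.swap ⟨kk, by omega⟩ ⟨kk + 1, by omega⟩) c := by
  have h : (Finsupp.single j c).sum
      (fun x r => r • (Finsupp.single
        (x ∘ Equiv.swap (⟨kk, by omega⟩ : Fin (kk + ll + 2)) ⟨kk + 1, by omega⟩)
        (1 : k) : V k lam (kk + ll + 2)))
      = c • Finsupp.single (j ∘ Equiv.swap
          (⟨kk, by omega⟩ : Fin (kk + ll + 2)) ⟨kk + 1, by omega⟩) (1 : k) :=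
    Finsupp.sum_single_index (zero_smul _ _)
  rw [Smap, Finsupp.lift_apply, h, Finsupp.smul_single, smul_eq_mul, mul_one]

/-- Master commutation lemma: conjugating a modified transposition by the
permutation map induced by `swap u v`. -/
lemma master (k : Type*) [CommRing k] {ℓ K : ℕ} (lam : Fin ℓ → ℕ)
    (w : Fin K → Bool) (u v p q p' q' : Fin K)
    (S : Module.End k (V k lam K))
    (hS : ∀ (j : Fin K → Box lam) (c : k),
      S (Finsupp.single j c) = Finsupp.single (j ∘ Equiv.swap u v) c)
    (hp' : Equiv.swap u v p = p') (hq' : Equiv.swap u v q = q')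
    (hw : w q' = w q)
    (hord : q' < p' ↔ q < p) :
    S ∘ₗ modT k lam w p q = modT k lam w p' q' ∘ₗ S := by
  subst hp' hq'
  apply Finsupp.lhom_ext
  intro j c
  simp only [LinearMap.comp_apply, hS, modT_single_s7, map_smul]
  congr 1
  have e1 : (j ∘ ⇑(Equiv.swap u v)) (Equiv.swap u v p) = j p := by
    simp [Equiv.swap_apply_self]
  have e2 : (j ∘ ⇑(Equiv.swap u v)) (Equiv.swap u v q) = j q := by
    simp [Equiv.swap_apply_self]
  have e3 : (j ∘ ⇑(Equiv.swap p q)) ∘ ⇑(Equiv.swap u v)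
      = (j ∘ ⇑(Equiv.swap u v)) ∘ ⇑(Equiv.swap (Equiv.swap u v p) (Equiv.swap u v q)) := by
    funext t
    have h := Equiv.swap_apply_apply (Equiv.swap u v : Equiv.Perm (Fin K)) p q
    simp only [Function.comp_apply]
    rw [h]
    simp [Equiv.swap_apply_self]
  have e4 : ∀ cc : Box lam,
      Function.update (Function.update j p cc) q cc ∘ ⇑(Equiv.swap u v)
        = Function.update (Function.update (j ∘ ⇑(Equiv.swap u v))
            (Equiv.swap u v p) cc) (Equiv.swap u v q) cc := by
    intro cc
    rw [Function.update_comp_equiv, Function.update_comp_equiv, Equiv.symm_swap]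
  unfold modTF
  simp only [hw, hord, e1, e2]
  split_ifs <;>
    simp only [map_zero, map_neg, map_sum, hS, e3, neg_inj] <;>
    first
      | rfl
      | (refine Finset.sum_congr rfl fun cc _ => ?_; rw [e4])

lemma insW_eq_left {kk ll : ℕ} (a : Fin kk → Bool) (x y : Bool) (b : Fin ll → Bool)
    (t : Fin (kk + ll + 2)) (h : t.val = kk) : insW a x y b t = x := by
  unfold insW
  rw [dif_neg (by omega), dif_pos h]

lemma insW_eq_right {kk ll : ℕ} (a : Fin kk → Bool) (x y : Bool) (b : Fin ll → Bool)
    (t : Fin (kk + ll + 2)) (h : t.val = kk + 1) : insW a x y b t = y := by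
  unfold insW
  rw [dif_neg (by omega), dif_neg (by omega), dif_pos h]

/-- Master lemma for part (v). -/
lemma master_v (k : Type*) [CommRing k] {ℓ K : ℕ} (lam : Fin ℓ → ℕ)
    (w : Fin K → Bool) (u v : Fin K)
    (S : Module.End k (V k lam K))
    (hS : ∀ (j : Fin K → Box lam) (c : k),
      S (Finsupp.single j c) = Finsupp.single (j ∘ Equiv.swap u v) c)
    (hwu : w u = true) (hwv : w v = true) (huv : u < v) :
    modT k lam w v u ∘ₗ S = S ∘ₗ modT k lam w u v + LinearMap.id := by
  apply Finsupp.lhom_ext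
  intro j c
  simp only [LinearMap.comp_apply, LinearMap.add_apply, LinearMap.id_apply, hS,
    modT_single_s7, map_smul]
  unfold modTF
  have E1 : (j ∘ ⇑(Equiv.swap u v)) v = j u := by simp
  have E2 : (j ∘ ⇑(Equiv.swap u v)) u = j v := by simp
  have E3 : (j ∘ ⇑(Equiv.swap u v)) ∘ ⇑(Equiv.swap v u) = j := by
    funext t
    simp only [Function.comp_apply]
    rw [Equiv.swap_comm v u, Equiv.swap_apply_self]
  have E4 : (j ∘ ⇑(Equiv.swap u v)) ∘ ⇑(Equiv.swap u v) = j := by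
    funext t
    simp only [Function.comp_apply]
    rw [Equiv.swap_apply_self]
  simp only [hwu, hwv, eq_self_iff_true, if_true, if_pos huv, if_neg (lt_asymm huv),
    E1, E2, E3]
  by_cases hc : (j v).1 < (j u).1
  · rw [if_pos hc, if_neg (not_le.mpr hc), map_neg, hS, E4]
    simp [Finsupp.smul_single]
  · rw [if_neg hc, if_pos (not_lt.mp hc), map_zero]
    simp [Finsupp.smul_single]

/-- Lemma 4.5: interaction of `S` with the modified transpositions of the word `a↑↑b`.
Positions `p, q` are 1-based as in the paper. -/
theorem Smap_modT
    (k : Type*) [CommRing k] {ℓ : ℕ} (hℓ : 1 ≤ ℓ)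
    (lam : Fin ℓ → ℕ) (hpos : ∀ j, 0 < lam j) (huni : Unimodular lam)
    (m : Fin ℓ → k) (kk ll : ℕ)
    (a : Fin kk → Bool) (b : Fin ll → Bool)
    (p : ℕ) (hp1 : 1 ≤ p) (hpK : p ≤ kk + ll + 2)
    (hup : insW a false false b ⟨p - 1, by omega⟩ = true) :
    -- (i)
    (∀ (q : ℕ) (hq1 : 1 ≤ q) (hqK : q ≤ kk + ll + 2)
        (hq : q ≤ kk ∨ kk + 2 < q) (hqp : q ≠ p),
      (Smap k lam kk ll) ∘ₗ
          (modT k lam (insW a true true b) ⟨p - 1, by omega⟩ ⟨q - 1, by omega⟩) =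
        (modT k lam (insW a true true b) ⟨p - 1, by omega⟩ ⟨q - 1, by omega⟩) ∘ₗ
          (Smap k lam kk ll)) ∧
    -- (ii)
    ((Smap k lam kk ll) ∘ₗ
        (modT k lam (insW a true true b) ⟨p - 1, by omega⟩ ⟨kk, by omega⟩) =
      (modT k lam (insW a true true b) ⟨p - 1, by omega⟩ ⟨kk + 1, by omega⟩) ∘ₗ
        (Smap k lam kk ll)) ∧
    -- (iii)
    ((Smap k lam kk ll) ∘ₗ
        (modT k lam (insW a true true b) ⟨p - 1, by omega⟩ ⟨kk + 1, by omega⟩) =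
      (modT k lam (insW a true true b) ⟨p - 1, by omega⟩ ⟨kk, by omega⟩) ∘ₗ
        (Smap k lam kk ll)) ∧
    -- (iv)
    (∀ (q : ℕ) (hq1 : 1 ≤ q) (hqK : q ≤ kk + ll + 2)
        (hq : q ≤ kk ∨ kk + 2 < q),
      (Smap k lam kk ll) ∘ₗ
          (modT k lam (insW a true true b) ⟨kk, by omega⟩ ⟨q - 1, by omega⟩) =
        (modT k lam (insW a true true b) ⟨kk + 1, by omega⟩ ⟨q - 1, by omega⟩) ∘ₗ
          (Smap k lam kk ll)) ∧
    -- (v)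
    ((modT k lam (insW a true true b) ⟨kk + 1, by omega⟩ ⟨kk, by omega⟩) ∘ₗ
        (Smap k lam kk ll) =
      (Smap k lam kk ll) ∘ₗ
          (modT k lam (insW a true true b) ⟨kk, by omega⟩ ⟨kk + 1, by omega⟩) +
        LinearMap.id) := by
  have hwu : insW a true true b (⟨kk, by omega⟩ : Fin (kk + ll + 2)) = true :=
    insW_eq_left a true true b _ rfl
  have hwv : insW a true true b (⟨kk + 1, by omega⟩ : Fin (kk + ll + 2)) = true :=
    insW_eq_right a true true b _ rfl
  have hP : p - 1 < kk ∨ kk + 1 < p - 1 := by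
    by_contra hcon
    push_neg at hcon
    have hcase : p - 1 = kk ∨ p - 1 = kk + 1 := by omega
    rcases hcase with h | h
    · rw [insW_eq_left a false false b _ h] at hup
      exact absurd hup (by simp)
    · rw [insW_eq_right a false false b _ h] at hup
      exact absurd hup (by simp)
  have hsP : Equiv.swap (⟨kk, by omega⟩ : Fin (kk + ll + 2)) ⟨kk + 1, by omega⟩
      ⟨p - 1, by omega⟩ = ⟨p - 1, by omega⟩ :=
    Equiv.swap_apply_of_ne_of_ne (by simp only [ne_eq, Fin.mk.injEq]; omega)
      (by simp only [ne_eq, Fin.mk.injEq]; omega)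
  have hS : ∀ (j : Fin (kk + ll + 2) → Box lam) (c : k),
      Smap k lam kk ll (Finsupp.single j c) =
        Finsupp.single (j ∘ Equiv.swap (⟨kk, by omega⟩ : Fin (kk + ll + 2))
          ⟨kk + 1, by omega⟩) c := fun j c => smap_single k lam kk ll j c
  refine ⟨?_, ?_, ?_, ?_, ?_⟩
  · -- (i)
    intro q hq1 hqK hq hqp
    have hsQ : Equiv.swap (⟨kk, by omega⟩ : Fin (kk + ll + 2)) ⟨kk + 1, by omega⟩
        ⟨q - 1, by omega⟩ = ⟨q - 1, by omega⟩ :=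
      Equiv.swap_apply_of_ne_of_ne (by simp only [ne_eq, Fin.mk.injEq]; omega)
        (by simp only [ne_eq, Fin.mk.injEq]; omega)
    exact master k lam (insW a true true b) ⟨kk, by omega⟩ ⟨kk + 1, by omega⟩
      ⟨p - 1, by omega⟩ ⟨q - 1, by omega⟩ ⟨p - 1, by omega⟩ ⟨q - 1, by omega⟩
      (Smap k lam kk ll) hS hsP hsQ rfl Iff.rfl
  · -- (ii)
    exact master k lam (insW a true true b) ⟨kk, by omega⟩ ⟨kk + 1, by omega⟩
      ⟨p - 1, by omega⟩ ⟨kk, by omega⟩ ⟨p - 1, by omega⟩ ⟨kk + 1, by omega⟩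
      (Smap k lam kk ll) hS hsP (Equiv.swap_apply_left _ _)
      (hwv.trans hwu.symm)
      (by simp only [Fin.mk_lt_mk]; omega)
  · -- (iii)
    exact master k lam (insW a true true b) ⟨kk, by omega⟩ ⟨kk + 1, by omega⟩
      ⟨p - 1, by omega⟩ ⟨kk + 1, by omega⟩ ⟨p - 1, by omega⟩ ⟨kk, by omega⟩
      (Smap k lam kk ll) hS hsP (Equiv.swap_apply_right _ _)
      (hwu.trans hwv.symm)
      (by simp only [Fin.mk_lt_mk]; omega)
  · -- (iv)
    intro q hq1 hqK hq
    have hsQ : Equiv.swap (⟨kk, by omega⟩ : Fin (kk + ll + 2)) ⟨kk + 1, by omega⟩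
        ⟨q - 1, by omega⟩ = ⟨q - 1, by omega⟩ :=
      Equiv.swap_apply_of_ne_of_ne (by simp only [ne_eq, Fin.mk.injEq]; omega)
        (by simp only [ne_eq, Fin.mk.injEq]; omega)
    exact master k lam (insW a true true b) ⟨kk, by omega⟩ ⟨kk + 1, by omega⟩
      ⟨kk, by omega⟩ ⟨q - 1, by omega⟩ ⟨kk + 1, by omega⟩ ⟨q - 1, by omega⟩
      (Smap k lam kk ll) hS (Equiv.swap_apply_left _ _) hsQ rfl
      (by simp only [Fin.mk_lt_mk]; omega)
  · -- (v)
    exact master_v k lam (insW a true true b) ⟨kk, by omega⟩ ⟨kk + 1, by omega⟩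
      (Smap k lam kk ll) hS hwu hwv (by simp only [Fin.mk_lt_mk]; omega)
end

section
/- Suppose p and r are distinct integers with 1 ≤ p, r ≤ K and the word a satisfies a_p = a_r = ↑. Then (r,p)^a_λ ∘ e_p = −e_r ∘ (p,r)^a_λ in End_k(V(a)). -/
open Finset

/-- The map `e` on boxes: move a box one step to the left along its row when possible. -/
def eBox {ℓ : ℕ} (lam : Fin ℓ → ℕ) (b : Box lam) : Option (Box lam) :=
  if h : 0 < b.1.val ∧ b.2.val < lam ⟨b.1.val - 1, by have := b.1.isLt; omega⟩ then
    some ⟨⟨b.1.val - 1, by have := b.1.isLt; omega⟩, ⟨b.2.val, h.2⟩⟩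
  else none

/-- The endomorphism `e_p` of `V(a)` applying `e` in the `p`-th tensor position. -/
noncomputable def eEnd (k : Type*) [CommRing k] {ℓ K : ℕ} (lam : Fin ℓ → ℕ) (p : Fin K) :
    Module.End k (V k lam K) :=
  Finsupp.lift (V k lam K) k (Fin K → Box lam)
    (fun i =>
      match eBox lam (i p) with
      | some c => Finsupp.single (Function.update i p c) (1 : k)
      | none => 0)

lemma lift_single {k : Type*} [CommRing k] {ℓ K : ℕ} {lam : Fin ℓ → ℕ}
    (f : (Fin K → Box lam) → V k lam K) (j : Fin K → Box lam) (c : k) :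
    Finsupp.lift (V k lam K) k (Fin K → Box lam) f (Finsupp.single j c) = c • f j := by
  simp [Finsupp.lift_apply, Finsupp.sum_single_index]

/-- `(r,p)^a_λ ∘ e_p = −(e_r ∘ (p,r)^a_λ)` when `a_p = a_r = ↑`. -/
theorem modT_eEnd_anticomm
    (k : Type*) [CommRing k] {ℓ K : ℕ} (hℓ : 1 ≤ ℓ)
    (lam : Fin ℓ → ℕ) (hpos : ∀ j, 0 < lam j) (huni : Unimodular lam)
    (m : Fin ℓ → k)
    (a : Fin K → Bool) (p r : Fin K) (hpr : p ≠ r)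
    (hp : a p = true) (hr : a r = true) :
    (modT k lam a r p) ∘ₗ (eEnd k lam p) = -((eEnd k lam r) ∘ₗ (modT k lam a p r)) := by
  apply Finsupp.lhom_ext
  intro j c0
  have hswap : ∀ c : Box lam,
      (Function.update j p c) ∘ (Equiv.swap r p) = Function.update (j ∘ Equiv.swap p r) r c := by
    intro c
    funext x
    simp only [Function.comp_apply]
    rcases eq_or_ne x r with rfl | hxr
    · rw [Equiv.swap_apply_left, Function.update_self, Function.update_self]
    · rw [Function.update_of_ne hxr, Function.comp_apply]
      rcases eq_or_ne x p with rfl | hxp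
      · rw [Equiv.swap_apply_right, Equiv.swap_apply_left,
          Function.update_of_ne (Ne.symm hpr)]
      · rw [Equiv.swap_apply_of_ne_of_ne hxr hxp, Function.update_of_ne hxp,
          Equiv.swap_apply_of_ne_of_ne hxp hxr]
  simp only [LinearMap.comp_apply, LinearMap.neg_apply, eEnd, modT, lift_single]
  rcases heb : eBox lam (j p) with _ | c
  · -- eBox undefined: both sides vanish
    simp only [heb, smul_zero, map_zero, hp, hr, if_true]
    rcases hpr.lt_or_gt with hlt | hlt
    · rw [if_neg (not_lt_of_gt hlt)]
      split_ifs with h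
      · simp only [map_smul, map_neg, lift_single, Function.comp_apply,
          Equiv.swap_apply_right, heb]
        simp
      · simp
    · rw [if_pos hlt]
      split_ifs with h
      · simp only [map_smul, lift_single, Function.comp_apply,
          Equiv.swap_apply_right, heb]
        simp
      · simp
  · -- eBox defined
    have hcol : 0 < (j p).1.val ∧ c.1.val = (j p).1.val - 1 := by
      unfold eBox at heb
      split at heb
      · cases heb; exact ⟨by omega, rfl⟩
      · cases heb
    simp only [heb, hp, hr, if_true, map_smul]
    rw [lift_single]
    simp only [Function.update_self, Function.update_of_ne (Ne.symm hpr)]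
    rcases hpr.lt_or_gt with hlt | hlt
    · rw [if_pos hlt, if_neg (not_lt_of_gt hlt)]
      have hiff : ((j r).1 ≤ c.1) ↔ ((j r).1 < (j p).1) := by
        rw [Fin.le_def, Fin.lt_def]; omega
      split_ifs with h1 h2
      · simp only [map_smul, map_neg, lift_single, Function.comp_apply,
          Equiv.swap_apply_right, heb, hswap]
        simp
      · exact absurd (hiff.mp h1) h2
      · exact absurd (hiff.mpr (by assumption)) h1
      · simp
    · rw [if_neg (not_lt_of_gt hlt), if_pos hlt]
      have hiff : (c.1 < (j r).1) ↔ ((j p).1 ≤ (j r).1) := by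
        rw [Fin.le_def, Fin.lt_def]; omega
      split_ifs with h1 h2
      · simp only [map_smul, lift_single, Function.comp_apply,
          Equiv.swap_apply_right, heb, hswap]
        simp
      · exact absurd (hiff.mp h1) h2
      · exact absurd (hiff.mpr (by assumption)) h1
      · simp
end

section
/- Let a be a word in {↑,↓} of length K and consider the word ↑a of length K+1. Define X ∈ End_k(V(↑a)) by X(v_i) = e_1(v_i) + m_{col(i_1)} v_i + ∑_{q=2}^{K+1} (1,q)^{↑a}_λ v_i on basis vectors. For 1 ≤ t ≤ ℓ let g := (X − m_t·1) ∘ (X − m_{t+1}·1) ∘ ⋯ ∘ (X − m_ℓ·1). Then for every i ∈ B^{K+1}, the vector g(v_i) lies in the k-span of the basis vectors v_j with col(j_1) < t. In particular, if t = 1 then g = 0. -/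
open Finset

/-- The diagonal endomorphism `v_i ↦ m_{col(i_1)} v_i` of `V(↑a)`. -/
noncomputable def Mdiag (k : Type*) [CommRing k] {ℓ K : ℕ} (lam : Fin ℓ → ℕ)
    (m : Fin ℓ → k) : Module.End k (V k lam (K + 1)) :=
  Finsupp.lift (V k lam (K + 1)) k (Fin (K + 1) → Box lam)
    (fun i => Finsupp.single i (m (i 0).1))

/-- The endomorphism `X` of `V(↑a)`:
`X v_i = e_1 v_i + m_{col(i_1)} v_i + ∑_{q≠1} (1,q)^{↑a}_λ v_i`. -/
noncomputable def Xop (k : Type*) [CommRing k] {ℓ K : ℕ} (lam : Fin ℓ → ℕ)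
    (m : Fin ℓ → k) (a : Fin K → Bool) : Module.End k (V k lam (K + 1)) :=
  eEnd k lam (0 : Fin (K + 1)) + Mdiag k lam m +
    ∑ q ∈ Finset.univ.erase (0 : Fin (K + 1)),
      modT k lam (Fin.cons true a) (0 : Fin (K + 1)) q

/- auxiliary -/


noncomputable def Sspan (k : Type*) [CommRing k] {ℓ : ℕ} (lam : Fin ℓ → ℕ) (K : ℕ) (c : ℕ) :
    Submodule k (V k lam (K + 1)) :=
  Submodule.span k
    ((fun j : Fin (K + 1) → Box lam => (Finsupp.single j (1 : k) : V k lam (K + 1))) ''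
      {j | (j 0).1.val < c})

section
variable {k : Type*} [CommRing k] {ℓ K : ℕ} {lam : Fin ℓ → ℕ}

lemma single_mem_Sspan {c : ℕ} {j : Fin (K + 1) → Box lam} (h : (j 0).1.val < c) :
    (Finsupp.single j (1 : k) : V k lam (K + 1)) ∈ Sspan k lam K c :=
  Submodule.subset_span ⟨j, h, rfl⟩

lemma Sspan_mono {c c' : ℕ} (h : c ≤ c') : Sspan k lam K c ≤ Sspan k lam K c' :=
  Submodule.span_mono (Set.image_mono fun _ hj => lt_of_lt_of_le hj h)

lemma lift_single_s10 {M : Type*} [AddCommMonoid M] [Module k M] {X : Type*}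
    (f : X → M) (x : X) : Finsupp.lift M k X f (Finsupp.single x 1) = f x := by
  simp [Finsupp.lift_apply, Finsupp.sum_single_index]

lemma keyA (m : Fin ℓ → k) (a : Fin K → Bool) (j : Fin (K + 1) → Box lam) :
    Xop k lam m a (Finsupp.single j 1) - m (j 0).1 • Finsupp.single j 1 ∈
      Sspan k lam K (j 0).1.val := by
  have hX : Xop k lam m a (Finsupp.single j 1) =
      eEnd k lam 0 (Finsupp.single j 1) + Mdiag k lam m (Finsupp.single j 1) +
        ∑ q ∈ Finset.univ.erase (0 : Fin (K + 1)),
          modT k lam (Fin.cons true a) 0 q (Finsupp.single j 1) := by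
    simp [Xop, LinearMap.add_apply, LinearMap.sum_apply]
  have hM : Mdiag k lam m (Finsupp.single j 1) = m (j 0).1 • Finsupp.single j 1 := by
    rw [Mdiag, lift_single_s10, Finsupp.smul_single, smul_eq_mul, mul_one]
  rw [hX, hM]
  have heq : eEnd k lam 0 (Finsupp.single j 1) + m (j 0).1 • Finsupp.single j 1 +
      (∑ q ∈ Finset.univ.erase (0 : Fin (K + 1)),
        modT k lam (Fin.cons true a) 0 q (Finsupp.single j 1)) -
      m (j 0).1 • Finsupp.single j 1 =
      eEnd k lam 0 (Finsupp.single j 1) +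
      ∑ q ∈ Finset.univ.erase (0 : Fin (K + 1)),
        modT k lam (Fin.cons true a) 0 q (Finsupp.single j 1) := by abel
  rw [heq]
  refine Submodule.add_mem _ ?_ (Submodule.sum_mem _ fun q hq => ?_)
  · rw [eEnd, lift_single_s10]
    rcases heB : eBox lam (j 0) with _ | c
    · exact Submodule.zero_mem _
    · refine single_mem_Sspan (?_ : ((Function.update j 0 c) 0).1.val < _)
      unfold eBox at heB
      split_ifs at heB with h
      cases heB
      simp only [Function.update_self]
      omega
  · have hq0 : q ≠ 0 := (Finset.mem_erase.mp hq).1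
    have hnlt : ¬ q < 0 := by simp [Fin.not_lt, Fin.zero_le]
    rw [modT, lift_single_s10]
    by_cases hb : (Fin.cons true a : Fin (K + 1) → Bool) q = true
    case neg =>
      simp only [hb, if_neg hnlt, Bool.false_eq_true, if_false, eq_self_iff_true]
      split_ifs with h
      · exact Submodule.sum_mem _ fun c hc => by
          have hc' : c.1 < (j 0).1 := (Finset.mem_filter.mp hc).2
          refine single_mem_Sspan ?_
          rw [Function.update_of_ne (Ne.symm hq0), Function.update_self]
          exact hc'
      · exact Submodule.zero_mem _
    case pos =>
      rw [if_pos hb, if_neg hnlt]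
      split_ifs with h
      · refine Submodule.neg_mem _ (single_mem_Sspan ?_)
        simp only [Function.comp_apply, Equiv.swap_apply_left]
        exact h
      · exact Submodule.zero_mem _

lemma keyStep (m : Fin ℓ → k) (a : Fin K → Bool) (u : ℕ) (hu : u < ℓ)
    {v : V k lam (K + 1)} (hv : v ∈ Sspan k lam K (u + 1)) :
    (Xop k lam m a - m ⟨u, hu⟩ • 1) v ∈ Sspan k lam K u := by
  have : Sspan k lam K (u + 1) ≤
      Submodule.comap (Xop k lam m a - m ⟨u, hu⟩ • (1 : Module.End k (V k lam (K + 1))))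
        (Sspan k lam K u) := by
    rw [Sspan, Submodule.span_le]
    rintro _ ⟨j, hj, rfl⟩
    simp only [Set.mem_setOf_eq] at hj
    simp only [SetLike.mem_coe, Submodule.mem_comap, LinearMap.sub_apply,
      LinearMap.smul_apply, Module.End.one_apply]
    rcases Nat.lt_or_ge (j 0).1.val u with h | h
    · have h1 := keyA m a j
      have h2 : Xop k lam m a (Finsupp.single j 1) - m ⟨u, hu⟩ • Finsupp.single j 1 =
          (Xop k lam m a (Finsupp.single j 1) - m (j 0).1 • Finsupp.single j 1) +
            (m (j 0).1 - m ⟨u, hu⟩) • Finsupp.single j 1 := by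
        rw [sub_smul]; abel
      rw [h2]
      exact Submodule.add_mem _ (Sspan_mono (le_of_lt h) h1)
        (Submodule.smul_mem _ _ (single_mem_Sspan h))
    · have hval : u = (j 0).1.val := by omega
      subst hval
      have hju : (⟨(j 0).1.val, hu⟩ : Fin ℓ) = (j 0).1 := Fin.ext rfl
      rw [hju]
      exact keyA m a j
  exact this hv

lemma mainProd (m : Fin ℓ → k) (a : Fin K → Bool) :
    ∀ (n u : ℕ) (h : u + n ≤ ℓ) (v : V k lam (K + 1)), v ∈ Sspan k lam K (u + n) →
      (((List.finRange n).map (fun s : Fin n => Xop k lam m a -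
          m ⟨u + s.val, by omega⟩ • (1 : Module.End k (V k lam (K + 1))))).prod) v ∈
        Sspan k lam K u := by
  intro n
  induction n with
  | zero => intro u h v hv; simpa using hv
  | succ n ih =>
    intro u h v hv
    rw [List.finRange_succ, List.map_cons, List.prod_cons, List.map_map]
    have h2 := ih (u + 1) (by omega) v (by rw [show u + 1 + n = u + (n + 1) by ring]; exact hv)
    have heq : ((List.finRange n).map ((fun s : Fin (n+1) => Xop k lam m a -
          m ⟨u + s.val, by omega⟩ • (1 : Module.End k (V k lam (K + 1)))) ∘ Fin.succ)) =
        ((List.finRange n).map (fun s : Fin n => Xop k lam m a -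
          m ⟨u + 1 + s.val, by omega⟩ • (1 : Module.End k (V k lam (K + 1))))) := by
      refine List.map_congr_left fun s _ => ?_
      simp only [Function.comp_apply, Fin.val_succ]
      have harith : u + (s.val + 1) = u + 1 + s.val := by omega
      congr 1
      have : ((⟨u + (s.val + 1), by omega⟩ : Fin ℓ)) = ⟨u + 1 + s.val, by omega⟩ :=
        Fin.ext harith
      rw [show ((⟨u + (s.val + 1), by omega⟩ : Fin ℓ)) = ⟨u + 1 + s.val, by omega⟩ from
        Fin.ext harith]
    rw [Module.End.mul_apply, heq]
    exact keyStep m a u (by omega) h2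

end

/-- Lemma 4.8: for `g = (X − m_t)∘(X − m_{t+1})∘⋯∘(X − m_ℓ)`, each `g(v_i)` lies in the
span of the basis vectors `v_j` with `col(j_1) < t` (columns 1-based); in particular
`g = 0` when `t = 1`. -/
theorem Xop_poly_span
    (k : Type*) [CommRing k] {ℓ K : ℕ} (hℓ : 1 ≤ ℓ)
    (lam : Fin ℓ → ℕ) (hpos : ∀ j, 0 < lam j) (huni : Unimodular lam)
    (m : Fin ℓ → k) (a : Fin K → Bool)
    (t : ℕ) (ht1 : 1 ≤ t) (ht2 : t ≤ ℓ)
    (g : Module.End k (V k lam (K + 1)))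
    (hg : g = ((List.finRange (ℓ + 1 - t)).map
        (fun s => Xop k lam m a -
          (m ⟨t - 1 + s.val, by have := s.isLt; omega⟩) • (1 : Module.End k (V k lam (K + 1))))).prod) :
    (∀ i : Fin (K + 1) → Box lam,
      g (Finsupp.single i (1 : k)) ∈
        Submodule.span k
          ((fun j : Fin (K + 1) → Box lam => (Finsupp.single j (1 : k) : V k lam (K + 1))) ''
            {j | (j 0).1.val + 1 < t})) ∧
    (t = 1 → g = 0) := by
  have hset : {j : Fin (K + 1) → Box lam | (j 0).1.val + 1 < t} =
      {j : Fin (K + 1) → Box lam | (j 0).1.val < t - 1} := by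
    ext j; simp only [Set.mem_setOf_eq]; omega
  have hspan : Submodule.span k
      ((fun j : Fin (K + 1) → Box lam => (Finsupp.single j (1 : k) : V k lam (K + 1))) ''
        {j | (j 0).1.val + 1 < t}) = Sspan k lam K (t - 1) := by
    rw [Sspan, hset]
  have H : ∀ i : Fin (K + 1) → Box lam,
      g (Finsupp.single i (1 : k)) ∈
        Submodule.span k
          ((fun j : Fin (K + 1) → Box lam => (Finsupp.single j (1 : k) : V k lam (K + 1))) ''
            {j | (j 0).1.val + 1 < t}) := by
    intro i
    rw [hg, hspan]
    exact mainProd m a (ℓ + 1 - t) (t - 1) (by omega) _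
      (single_mem_Sspan (by have := (i 0).1.isLt; omega))
  refine ⟨H, fun ht => ?_⟩
  subst ht
  refine Finsupp.lhom_ext fun i b => ?_
  have h0 := H i
  have hempty : {j : Fin (K + 1) → Box lam | (j 0).1.val + 1 < 1} = ∅ := by
    ext j; simp
  rw [hempty] at h0
  simp only [Set.image_empty, Submodule.span_empty, Submodule.mem_bot] at h0
  have hb : (Finsupp.single i b : V k lam (K + 1)) = b • Finsupp.single i 1 := by
    rw [Finsupp.smul_single, smul_eq_mul, mul_one]
  rw [hb, map_smul, h0, smul_zero]
  simp
end

section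
/- Let k be a commutative ring, ℓ ≥ 1, and m_1,…,m_ℓ, λ_1,…,λ_ℓ ∈ k. Then for every K ≥ 1: ∑_{i+j=K, i,j≥0} h_i(m_1,…,m_ℓ) · e_j(λ_1−m_1,…,λ_ℓ−m_ℓ) = ∑_{r=1}^{K} ∑_{1≤p_1<⋯<p_r≤ℓ} h_{K−r}(m_{p_1},…,m_{p_r}) · λ_{p_1}⋯λ_{p_r}. -/
open Finset

/-- The complete homogeneous symmetric polynomial of degree `d` in the family of
elements `x i`, `i ∈ S`: the sum of all monomials of total degree `d`. -/
noncomputable def hsym {R : Type*} [CommRing R] {ι : Type*} [DecidableEq ι]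
    (S : Finset ι) (x : ι → R) (d : ℕ) : R :=
  ∑ t ∈ S.sym d, ((t : Multiset ι).map x).prod

/-- The elementary symmetric polynomial of degree `d` in the family of elements
`x i`, `i ∈ S`: the sum of all products of `d` distinct members. -/
noncomputable def esym {R : Type*} [CommRing R] {ι : Type*} [DecidableEq ι]
    (S : Finset ι) (x : ι → R) (d : ℕ) : R :=
  ∑ t ∈ S.powersetCard d, ∏ i ∈ t, x i

section lemmas
variable {R : Type*} [CommRing R] {ι : Type*} [DecidableEq ι]

lemma hsym_zero (S : Finset ι) (x : ι → R) : hsym S x 0 = 1 := by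
  rw [hsym]
  simp only [sym_zero, sum_singleton]
  rfl

lemma hsym_empty (x : ι → R) (d : ℕ) : hsym (∅ : Finset ι) x d = if d = 0 then 1 else 0 := by
  cases d <;> simp [hsym] <;> rfl

lemma sym_insert_split {a : ι} {S : Finset ι} (ha : a ∉ S) (n : ℕ) :
    (insert a S).sym (n+1) = S.sym (n+1) ∪ ((insert a S).sym n).image (Sym.cons a) := by
  ext t
  simp only [mem_sym_iff, mem_union, mem_image]
  constructor
  · intro h
    by_cases hat : a ∈ t
    · refine Or.inr ⟨t.erase a hat, fun b hb => ?_, Sym.cons_erase hat⟩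
      have : b ∈ t := by
        have := Sym.coe_erase (s := t) (a := a) (h := hat)
        have hb' : b ∈ (t : Multiset ι).erase a := by
          rw [← this]; exact_mod_cast hb
        exact Multiset.mem_of_mem_erase hb'
      exact h b this
    · exact Or.inl fun b hb => by
        rcases mem_insert.mp (h b hb) with rfl | hbS
        · exact absurd hb hat
        · exact hbS
  · rintro (h | ⟨t', ht', rfl⟩)
    · exact fun b hb => mem_insert_of_mem (h b hb)
    · intro b hb
      rcases Sym.mem_cons.mp hb with rfl | hb
      · exact mem_insert_self _ _
      · exact ht' b hb

lemma hsym_insert {a : ι} {S : Finset ι} (ha : a ∉ S) (x : ι → R) (n : ℕ) :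
    hsym (insert a S) x (n+1) = hsym S x (n+1) + x a * hsym (insert a S) x n := by
  rw [hsym, sym_insert_split ha, sum_union, sum_image]
  · rw [hsym, hsym, mul_sum]
    congr 1
    refine sum_congr rfl fun t ht => ?_
    rw [Sym.coe_cons, Multiset.map_cons, Multiset.prod_cons]
  · intro t _ t' _ h
    exact (Sym.cons_inj_right a t t').mp h
  · rw [disjoint_left]
    rintro t htS ht
    rcases mem_image.mp ht with ⟨t', _, rfl⟩
    exact ha (mem_sym_iff.mp htS a (Sym.mem_cons_self a t'))
end lemmas

section ps
variable {R : Type*} [CommRing R] {ι : Type*} [DecidableEq ι]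

lemma prod_mul_mk_hsym (S : Finset ι) (x : ι → R) :
    (∏ p ∈ S, (1 - PowerSeries.C (x p) * PowerSeries.X)) *
      PowerSeries.mk (fun d => hsym S x d) = 1 := by
  induction S using Finset.induction with
  | empty =>
    rw [prod_empty, one_mul]
    ext n
    simp [PowerSeries.coeff_mk, hsym_empty, PowerSeries.coeff_one]
  | @insert a S ha ih =>
    have key : (1 - PowerSeries.C (x a) * PowerSeries.X) *
        PowerSeries.mk (fun d => hsym (insert a S) x d) =
        PowerSeries.mk (fun d => hsym S x d) := by
      ext n
      rw [sub_mul, one_mul, map_sub, PowerSeries.coeff_mk]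
      cases n with
      | zero =>
        simp [hsym_zero, mul_assoc, PowerSeries.coeff_zero_mul_X]
      | succ n =>
        rw [mul_assoc, PowerSeries.coeff_C_mul, PowerSeries.coeff_succ_X_mul,
          PowerSeries.coeff_mk, PowerSeries.coeff_mk, hsym_insert ha]
        ring
    rw [prod_insert ha, mul_assoc, mul_left_comm, key, ih]

lemma coeff_X_pow_mul' (f : PowerSeries R) (r n : ℕ) :
    PowerSeries.coeff n (PowerSeries.X ^ r * f) =
      if r ≤ n then PowerSeries.coeff (n - r) f else 0 := by
  split
  · next h =>
    conv_lhs => rw [show n = (n - r) + r from (Nat.sub_add_cancel h).symm]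
    rw [PowerSeries.coeff_X_pow_mul]
  · next h =>
    rw [PowerSeries.coeff_mul]
    apply sum_eq_zero
    rintro ⟨i, j⟩ hij
    rw [HasAntidiagonal.mem_antidiagonal] at hij
    have : i ≠ r := by omega
    rw [PowerSeries.coeff_X_pow, if_neg this, zero_mul]
end ps

section ps2
variable {R : Type*} [CommRing R] {ι : Type*} [DecidableEq ι]

lemma prod_one_add_eq (S : Finset ι) (y : ι → R) :
    ∏ p ∈ S, (1 + PowerSeries.C (y p) * PowerSeries.X) =
      ∑ t ∈ S.powerset, PowerSeries.C (∏ p ∈ t, y p) * PowerSeries.X ^ t.card := by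
  have h1 : ∀ p ∈ S, (1 : PowerSeries R) + PowerSeries.C (y p) * PowerSeries.X =
      (PowerSeries.C (y p) * PowerSeries.X) + 1 := fun p _ => add_comm _ _
  rw [prod_congr rfl h1, Finset.prod_add]
  refine sum_congr rfl fun t _ => ?_
  rw [prod_const_one, mul_one, prod_mul_distrib, prod_const, map_prod]

lemma coeff_prod_one_add (S : Finset ι) (y : ι → R) (n : ℕ) :
    PowerSeries.coeff n (∏ p ∈ S, (1 + PowerSeries.C (y p) * PowerSeries.X)) =
      esym S y n := by
  rw [prod_one_add_eq, map_sum, esym, powersetCard_eq_filter, sum_filter]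
  refine sum_congr rfl fun t _ => ?_
  rw [PowerSeries.coeff_C_mul, PowerSeries.coeff_X_pow]
  rcases eq_or_ne n t.card with h | h
  · rw [if_pos h, if_pos h.symm, mul_one]
  · rw [if_neg h, if_neg (Ne.symm h), mul_zero]

lemma H_mul_compl (S t : Finset ι) (ht : t ⊆ S) (x : ι → R) :
    PowerSeries.mk (fun d => hsym S x d) *
        (∏ p ∈ S \ t, (1 - PowerSeries.C (x p) * PowerSeries.X)) =
      PowerSeries.mk (fun d => hsym t x d) := by
  have h1 := prod_mul_mk_hsym t x
  have h2 := prod_mul_mk_hsym S x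
  have h3 : (∏ p ∈ S \ t, (1 - PowerSeries.C (x p) * PowerSeries.X)) *
      ∏ p ∈ t, (1 - PowerSeries.C (x p) * PowerSeries.X) =
      ∏ p ∈ S, (1 - PowerSeries.C (x p) * PowerSeries.X) := prod_sdiff ht
  calc PowerSeries.mk (fun d => hsym S x d) *
        (∏ p ∈ S \ t, (1 - PowerSeries.C (x p) * PowerSeries.X))
      = PowerSeries.mk (fun d => hsym S x d) *
        (∏ p ∈ S \ t, (1 - PowerSeries.C (x p) * PowerSeries.X)) *
        ((∏ p ∈ t, (1 - PowerSeries.C (x p) * PowerSeries.X)) *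
          PowerSeries.mk (fun d => hsym t x d)) := by rw [h1, mul_one]
    _ = ((∏ p ∈ S \ t, (1 - PowerSeries.C (x p) * PowerSeries.X)) *
          ∏ p ∈ t, (1 - PowerSeries.C (x p) * PowerSeries.X)) *
          PowerSeries.mk (fun d => hsym S x d) *
          PowerSeries.mk (fun d => hsym t x d) := by ring
    _ = PowerSeries.mk (fun d => hsym t x d) := by rw [h3, h2, one_mul]
end ps2

/-- `∑_{i+j=K} h_i(m) e_j(λ−m) = ∑_{r=1}^{K} ∑_{1≤p_1<⋯<p_r≤ℓ} h_{K−r}(m_{p_1},…,m_{p_r}) λ_{p_1}⋯λ_{p_r}`. -/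
theorem delta_eq_chain_sum
    (k : Type*) [CommRing k] (ℓ : ℕ) (hℓ : 1 ≤ ℓ)
    (m : Fin ℓ → k) (lam : Fin ℓ → k) (K : ℕ) (hK : 1 ≤ K) :
    ∑ ij ∈ Finset.HasAntidiagonal.antidiagonal K,
        hsym Finset.univ m ij.1 * esym Finset.univ (fun p => lam p - m p) ij.2 =
      ∑ r ∈ Finset.Icc 1 K, ∑ S ∈ (Finset.univ : Finset (Fin ℓ)).powersetCard r,
        hsym S m (K - r) * ∏ p ∈ S, lam p := by
  classical
  set H : PowerSeries k := PowerSeries.mk (fun d => hsym (univ : Finset (Fin ℓ)) m d) with hH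
  set Ebar : PowerSeries k :=
    ∏ p : Fin ℓ, (1 + PowerSeries.C (lam p - m p) * PowerSeries.X) with hE
  have step1 : ∑ ij ∈ Finset.HasAntidiagonal.antidiagonal K,
      hsym Finset.univ m ij.1 * esym Finset.univ (fun p => lam p - m p) ij.2 =
      PowerSeries.coeff K (H * Ebar) := by
    rw [PowerSeries.coeff_mul]
    refine sum_congr rfl fun ij _ => ?_
    rw [hH, PowerSeries.coeff_mk, hE, coeff_prod_one_add]
  have e2 : Ebar = ∑ t ∈ (univ : Finset (Fin ℓ)).powerset,
      (∏ p ∈ t, (PowerSeries.C (lam p) * PowerSeries.X)) *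
        ∏ p ∈ univ \ t, (1 - PowerSeries.C (m p) * PowerSeries.X) := by
    rw [← Finset.prod_add, hE]
    refine prod_congr rfl fun p _ => ?_
    rw [map_sub]; ring
  have e3 : H * Ebar = ∑ t ∈ (univ : Finset (Fin ℓ)).powerset,
      PowerSeries.C (∏ p ∈ t, lam p) * (PowerSeries.X ^ t.card *
        PowerSeries.mk (fun d => hsym t m d)) := by
    rw [e2, mul_sum]
    refine sum_congr rfl fun t ht => ?_
    have hc := H_mul_compl (univ : Finset (Fin ℓ)) t (mem_powerset.mp ht) m
    calc H * ((∏ p ∈ t, (PowerSeries.C (lam p) * PowerSeries.X)) *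
          ∏ p ∈ univ \ t, (1 - PowerSeries.C (m p) * PowerSeries.X))
        = (∏ p ∈ t, (PowerSeries.C (lam p) * PowerSeries.X)) *
          (H * ∏ p ∈ univ \ t, (1 - PowerSeries.C (m p) * PowerSeries.X)) := by ring
      _ = (PowerSeries.C (∏ p ∈ t, lam p) * PowerSeries.X ^ t.card) *
          PowerSeries.mk (fun d => hsym t m d) := by
          rw [hc, prod_mul_distrib, prod_const, map_prod]
      _ = _ := by ring
  have step2 : PowerSeries.coeff K (H * Ebar) =
      ∑ t ∈ (univ : Finset (Fin ℓ)).powerset,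
        (∏ p ∈ t, lam p) * (if t.card ≤ K then hsym t m (K - t.card) else 0) := by
    rw [e3, map_sum]
    refine sum_congr rfl fun t _ => ?_
    rw [PowerSeries.coeff_C_mul, coeff_X_pow_mul']
    split <;> simp [PowerSeries.coeff_mk]
  set f : ℕ → k := fun r =>
    if r ≤ K then ∑ t ∈ (univ : Finset (Fin ℓ)).powersetCard r,
      (∏ p ∈ t, lam p) * hsym t m (K - r) else 0 with hf
  have step3 : ∑ t ∈ (univ : Finset (Fin ℓ)).powerset,
      (∏ p ∈ t, lam p) * (if t.card ≤ K then hsym t m (K - t.card) else 0) =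
      ∑ r ∈ range (ℓ + 1), f r := by
    rw [Finset.sum_powerset]
    rw [card_univ, Fintype.card_fin]
    refine sum_congr rfl fun r _ => ?_
    simp only [hf]
    split
    · next h =>
      refine sum_congr rfl fun t ht => ?_
      rw [(mem_powersetCard.mp ht).2, if_pos h]
    · next h =>
      refine sum_eq_zero fun t ht => ?_
      rw [(mem_powersetCard.mp ht).2, if_neg h, mul_zero]
  have hcard : ∀ r, ℓ < r → (univ : Finset (Fin ℓ)).powersetCard r = ∅ := by
    intro r hr
    rw [powersetCard_eq_empty, card_univ, Fintype.card_fin]; exact hr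
  set M := max ℓ K with hM
  have s1 : ∑ r ∈ range (ℓ + 1), f r = ∑ r ∈ range (M + 1), f r := by
    refine sum_subset (by intro r hr; simp only [mem_range] at *; omega) fun r _ hr => ?_
    simp only [mem_range, not_lt] at hr
    simp only [hf]
    split
    · rw [hcard r (by omega), sum_empty]
    · rfl
  have s2 : ∑ r ∈ Finset.Icc 1 K, f r = ∑ r ∈ range (M + 1), f r := by
    refine sum_subset (by intro r hr; simp only [mem_Icc, mem_range] at *; omega)
      fun r hr hr' => ?_
    simp only [mem_range] at hr
    simp only [mem_Icc, not_and, not_le] at hr'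
    simp only [hf]
    rcases Nat.eq_zero_or_pos r with rfl | hpos
    · rw [if_pos (by omega), powersetCard_zero, sum_singleton, prod_empty, one_mul,
        Nat.sub_zero, hsym_empty, if_neg (by omega)]
    · rw [if_neg (by specialize hr' hpos; omega)]
  rw [step1, step2, step3, s1, ← s2]
  refine sum_congr rfl fun r hr => ?_
  simp only [hf]; rw [if_pos (mem_Icc.mp hr).2]
  exact sum_congr rfl fun t _ => mul_comm _ _
end

section
/- Let R be a commutative ring, ℓ ≥ 1, and λ_1,…,λ_ℓ ∈ R. Then the determinant of the ℓ×ℓ matrix whose (i,j)-entry is e_{i−1}(λ_1,…,λ_{j−1},λ_{j+1},…,λ_ℓ), i.e. the (i−1)-st elementary symmetric polynomial of the ℓ−1 elements obtained by omitting λ_j, equals ∏_{1≤i<j≤ℓ}(λ_i − λ_j). -/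
open Finset

lemma esym_eq_esymm {R : Type*} [CommRing R] {ι : Type*} [DecidableEq ι]
    (S : Finset ι) (x : ι → R) (d : ℕ) :
    esym S x d = (S.val.map x).esymm d := by
  rw [esym, Finset.esymm_map_val]

lemma prod_sub_eq_sum_esym {R : Type*} [CommRing R] {ι : Type*} [DecidableEq ι]
    (S : Finset ι) (lam : ι → R) (x : R) :
    ∏ k ∈ S, (x - lam k) =
      ∑ j ∈ Finset.range (S.card + 1), (-1 : R) ^ j * esym S lam j * x ^ (S.card - j) := by
  have h := congrArg (Polynomial.eval x)
    (Multiset.prod_X_sub_X_eq_sum_esymm (S.val.map lam))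
  simp only [Multiset.map_map, Function.comp, Polynomial.eval_multiset_prod,
    Polynomial.eval_finset_sum, Polynomial.eval_mul, Polynomial.eval_pow,
    Polynomial.eval_sub, Polynomial.eval_X, Polynomial.eval_C, Polynomial.eval_one,
    Polynomial.eval_neg, Multiset.card_map] at h
  simp only [esym_eq_esymm, mul_assoc]
  convert h using 2 <;> rfl

lemma prod_Ioi_rev {R : Type*} [CommRing R] {ℓ : ℕ} (f : Fin ℓ → Fin ℓ → R) :
    (∏ i : Fin ℓ, ∏ j ∈ Ioi i, f (Fin.rev j) (Fin.rev i)) =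
      ∏ i : Fin ℓ, ∏ j ∈ Ioi i, f i j := by
  rw [Finset.prod_sigma', Finset.prod_sigma']
  refine Finset.prod_bij' (fun p _ => (⟨Fin.rev p.2, Fin.rev p.1⟩ : Σ _ : Fin ℓ, Fin ℓ))
    (fun p _ => (⟨Fin.rev p.2, Fin.rev p.1⟩ : Σ _ : Fin ℓ, Fin ℓ)) ?_ ?_ ?_ ?_ ?_ <;>
    simp [Fin.rev_lt_rev, Fin.rev_rev]

lemma prod_Iio_swap {R : Type*} [CommRing R] {ℓ : ℕ} (g : Fin ℓ → Fin ℓ → R) :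
    (∏ j : Fin ℓ, ∏ k ∈ Iio j, g j k) = ∏ i : Fin ℓ, ∏ j ∈ Ioi i, g j i := by
  rw [Finset.prod_sigma', Finset.prod_sigma']
  refine Finset.prod_bij' (fun p _ => (⟨p.2, p.1⟩ : Σ _ : Fin ℓ, Fin ℓ))
    (fun p _ => (⟨p.2, p.1⟩ : Σ _ : Fin ℓ, Fin ℓ)) ?_ ?_ ?_ ?_ ?_ <;> simp

lemma det_esym_domain {R : Type*} [CommRing R] [IsDomain R] (ℓ : ℕ) (hℓ : 1 ≤ ℓ)
    (lam : Fin ℓ → R) (hinj : Function.Injective lam) :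
    (Matrix.of fun i j : Fin ℓ => esym (Finset.univ.erase j) lam i.val).det =
      ∏ i : Fin ℓ, ∏ j ∈ Finset.Ioi i, (lam i - lam j) := by
  set M : Matrix (Fin ℓ) (Fin ℓ) R :=
    Matrix.of fun i j => esym (univ.erase j) lam i.val with hM
  set N : Matrix (Fin ℓ) (Fin ℓ) R := Matrix.of fun i j => (-1:R)^(i:ℕ) * M i j with hN
  set V : Matrix (Fin ℓ) (Fin ℓ) R := Matrix.of fun m i => lam m ^ (ℓ - 1 - (i:ℕ)) with hV
  set P : R := ∏ i : Fin ℓ, ∏ j ∈ Ioi i, (lam i - lam j) with hP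
  set ε : R := ∏ i : Fin ℓ, (-1:R)^(i:ℕ) with hε
  have hcard : ∀ j : Fin ℓ, (univ.erase j).card = ℓ - 1 := by
    intro j; rw [Finset.card_erase_of_mem (mem_univ j), Finset.card_univ, Fintype.card_fin]
  have key : ∀ m j : Fin ℓ, (V * N) m j = ∏ k ∈ univ.erase j, (lam m - lam k) := by
    intro m j
    rw [Matrix.mul_apply,
      prod_sub_eq_sum_esym (univ.erase j) lam (lam m), hcard j,
      Nat.sub_add_cancel hℓ, ← Fin.sum_univ_eq_sum_range
        (fun d => (-1:R)^d * esym (univ.erase j) lam d * lam m ^ (ℓ - 1 - d)) ℓ]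
    apply Finset.sum_congr rfl
    intro i _
    simp only [hV, hN, hM, Matrix.of_apply]
    ring
  have hdiag : V * N = Matrix.diagonal (fun j => ∏ k ∈ univ.erase j, (lam j - lam k)) := by
    ext m j
    rw [key]
    rcases eq_or_ne m j with rfl | hmj
    · simp
    · rw [Matrix.diagonal_apply_ne _ hmj]
      exact Finset.prod_eq_zero (Finset.mem_erase.mpr ⟨hmj, mem_univ m⟩) (sub_self _)
  have hdetN : N.det = ε * M.det := Matrix.det_mul_column _ _
  have hdetV : V.det = P := by
    have hVsub : V = (Matrix.vandermonde (lam ∘ Fin.rev)).submatrix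
        (Fin.revPerm : Equiv.Perm (Fin ℓ)) (Fin.revPerm : Equiv.Perm (Fin ℓ)) := by
      ext m i
      simp only [hV, Matrix.of_apply, Matrix.submatrix_apply, Matrix.vandermonde,
        Function.comp, Equiv.coe_fn_mk, Fin.revPerm_apply, Fin.rev_rev, Matrix.of_apply]
      congr 1
      rw [Fin.val_rev]
      omega
    rw [hVsub, Matrix.det_submatrix_equiv_self, Matrix.det_vandermonde, hP]
    exact prod_Ioi_rev (fun a b => lam a - lam b)
  have hε2 : ε * ε = 1 := by
    rw [hε, ← Finset.prod_mul_distrib]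
    apply Finset.prod_eq_one
    intro i _
    rw [← pow_add]
    exact Even.neg_one_pow ⟨(i:ℕ), rfl⟩
  have hIio : (∏ j : Fin ℓ, ∏ k ∈ Iio j, (lam j - lam k)) = ε * P := by
    rw [prod_Iio_swap (fun a b => lam a - lam b)]
    have hone : ∀ i : Fin ℓ, (∏ j ∈ Ioi i, (lam j - lam i)) =
        (-1:R)^(ℓ - 1 - (i:ℕ)) * ∏ j ∈ Ioi i, (lam i - lam j) := by
      intro i
      calc (∏ j ∈ Ioi i, (lam j - lam i))
          = ∏ j ∈ Ioi i, ((-1) * (lam i - lam j)) :=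
            Finset.prod_congr rfl (fun j _ => by ring)
        _ = (∏ _j ∈ Ioi i, (-1:R)) * ∏ j ∈ Ioi i, (lam i - lam j) :=
            Finset.prod_mul_distrib
        _ = (-1:R)^(ℓ - 1 - (i:ℕ)) * ∏ j ∈ Ioi i, (lam i - lam j) := by
            rw [Finset.prod_const, Fin.card_Ioi]
    calc (∏ i : Fin ℓ, ∏ j ∈ Ioi i, (lam j - lam i))
        = ∏ i : Fin ℓ, ((-1:R)^(ℓ - 1 - (i:ℕ)) * ∏ j ∈ Ioi i, (lam i - lam j)) :=
          Finset.prod_congr rfl (fun i _ => hone i)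
      _ = (∏ i : Fin ℓ, (-1:R)^(ℓ - 1 - (i:ℕ))) * P := Finset.prod_mul_distrib
      _ = ε * P := by
          congr 1
          rw [hε]
          calc (∏ i : Fin ℓ, (-1:R)^(ℓ - 1 - (i:ℕ)))
              = ∏ i : Fin ℓ, (-1:R)^((Fin.rev i : ℕ)) :=
                Finset.prod_congr rfl (fun i _ => by rw [Fin.val_rev]; congr 1; omega)
            _ = ∏ i : Fin ℓ, (-1:R)^(i:ℕ) :=
                Equiv.prod_comp (Fin.revPerm : Equiv.Perm (Fin ℓ)) (fun i => (-1:R)^(i:ℕ))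
  have h1 : P * (ε * M.det) = ∏ j : Fin ℓ, ∏ k ∈ univ.erase j, (lam j - lam k) := by
    rw [← hdetV, ← hdetN, ← Matrix.det_mul, hdiag, Matrix.det_diagonal]
  have herase : ∀ j : Fin ℓ, univ.erase j = Iio j ∪ Ioi j := by
    intro j
    ext k
    simp only [Finset.mem_erase, Finset.mem_univ, and_true, Finset.mem_union,
      Finset.mem_Iio, Finset.mem_Ioi, Fin.lt_def, ne_eq, Fin.ext_iff]
    omega
  have hdisj : ∀ j : Fin ℓ, Disjoint (Iio j) (Ioi j) := by
    intro j
    rw [Finset.disjoint_left]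
    intro k hk hk'
    simp only [Finset.mem_Iio, Finset.mem_Ioi] at hk hk'
    exact absurd hk' (not_lt_of_gt hk)
  have h2 : (∏ j : Fin ℓ, ∏ k ∈ univ.erase j, (lam j - lam k)) = (ε * P) * P := by
    calc (∏ j : Fin ℓ, ∏ k ∈ univ.erase j, (lam j - lam k))
        = ∏ j : Fin ℓ, ((∏ k ∈ Iio j, (lam j - lam k)) * ∏ k ∈ Ioi j, (lam j - lam k)) :=
          Finset.prod_congr rfl (fun j _ => by rw [herase j, Finset.prod_union (hdisj j)])
      _ = (∏ j : Fin ℓ, ∏ k ∈ Iio j, (lam j - lam k)) *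
            ∏ j : Fin ℓ, ∏ k ∈ Ioi j, (lam j - lam k) := Finset.prod_mul_distrib
      _ = (ε * P) * P := by rw [hIio]
  have h12 := h1.trans h2
  have h3 : P * M.det = P * P := by
    calc P * M.det = ε * (ε * (P * M.det)) := by rw [← mul_assoc, hε2, one_mul]
      _ = ε * (P * (ε * M.det)) := by ring_nf
      _ = ε * ((ε * P) * P) := by rw [h12]
      _ = (ε * ε) * (P * P) := by ring
      _ = P * P := by rw [hε2, one_mul]
  have hPne : P ≠ 0 := by
    rw [hP]
    apply Finset.prod_ne_zero_iff.mpr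
    intro i _
    apply Finset.prod_ne_zero_iff.mpr
    intro j hj
    have hij : i ≠ j := ne_of_lt (Finset.mem_Ioi.mp hj)
    exact sub_ne_zero.mpr (fun h => hij (hinj h))
  exact mul_left_cancel₀ hPne h3

/-- The Vandermonde-type determinant: `det (e_{i−1}(λ_1,…,λ̂_j,…,λ_ℓ))_{i,j} = ∏_{i<j} (λ_i − λ_j)`
(rows and columns indexed by `Fin ℓ`, so the `(i,j)` entry has degree `i` in 0-based indexing). -/
theorem det_esym_omit_eq_vandermonde
    (R : Type*) [CommRing R] (ℓ : ℕ) (hℓ : 1 ≤ ℓ) (lam : Fin ℓ → R) :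
    (Matrix.of fun i j : Fin ℓ =>
        esym (Finset.univ.erase j) lam i.val).det =
      ∏ i : Fin ℓ, ∏ j ∈ Finset.Ioi i, (lam i - lam j) := by
  classical
  have hdom := det_esym_domain (R := MvPolynomial (Fin ℓ) ℤ) ℓ hℓ MvPolynomial.X
    MvPolynomial.X_injective
  let φ : MvPolynomial (Fin ℓ) ℤ →+* R := (MvPolynomial.aeval lam).toRingHom
  have hφX : ∀ i, φ (MvPolynomial.X i) = lam i := fun i => MvPolynomial.aeval_X lam i
  have hesym : ∀ (T : Finset (Fin ℓ)) (d : ℕ),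
      φ (esym T MvPolynomial.X d) = esym T lam d := by
    intro T d
    rw [esym, esym, map_sum]
    exact Finset.sum_congr rfl fun t _ => by
      rw [map_prod]
      exact Finset.prod_congr rfl fun i _ => hφX i
  have h := congrArg φ hdom
  rw [RingHom.map_det] at h
  have hL : φ.mapMatrix (Matrix.of fun i j : Fin ℓ =>
      esym (Finset.univ.erase j) MvPolynomial.X i.val) =
      Matrix.of fun i j : Fin ℓ => esym (Finset.univ.erase j) lam i.val := by
    ext i j
    simp only [RingHom.mapMatrix_apply, Matrix.map_apply, Matrix.of_apply]
    exact hesym _ _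
  have hR : φ (∏ i : Fin ℓ, ∏ j ∈ Finset.Ioi i,
      (MvPolynomial.X i - MvPolynomial.X j)) =
      ∏ i : Fin ℓ, ∏ j ∈ Finset.Ioi i, (lam i - lam j) := by
    rw [map_prod]
    refine Finset.prod_congr rfl fun i _ => ?_
    rw [map_prod]
    exact Finset.prod_congr rfl fun j _ => by rw [map_sub, hφX, hφX]
  rw [hL, hR] at h
  exact h
end
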